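/- The bivariate formal power series Q(x,y) = ∑ q(n,m) xⁿ yᵐ satisfies (y⁶ − x⁶ + 6y²x³ − 3y⁴ + 2x³ + 3y² − 1)Q³ + (x³y² − y⁴ + x³ + 2y² − 1)Q² + (x³ − y² + 1)Q + 1 = 0. -/

import Mathlib

/-- Relations of the modular group presentation ⟨U, S | U³, S²⟩:
`true` plays the role of `U`, `false` the role of `S`. -/
def modularRels : Set (FreeGroup Bool) :=
  {FreeGroup.of true ^ 3, FreeGroup.of false ^ 2}

/-- Γ = PSL₂(ℤ) presented as ⟨U, S | U³, S²⟩. -/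
abbrev ModularGroup' := PresentedGroup modularRels

/-- The letter map: `true ↦ U`, `false ↦ S`. -/
def letterΓ : Bool → ModularGroup' := fun b => PresentedGroup.of b

/-- The product in Γ of a word in the alphabet {U, S}. -/
def wordProd (l : List Bool) : ModularGroup' := (l.map letterΓ).prod

/-- `t n` is the number of words of length `n` in {U,S} equal to the identity in Γ. -/
noncomputable def t (n : ℕ) : ℕ :=
  Nat.card {w : Fin n → Bool // wordProd (List.ofFn w) = 1}

/-- `q n m` is the number of words in {U,S} with exactly `n` copies of `U` (= `true`)
and `m` copies of `S` (= `false`) that equal the identity in Γ. -/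
noncomputable def q (n m : ℕ) : ℕ :=
  Nat.card {l : List Bool // l.count true = n ∧ l.count false = m ∧ wordProd l = 1}

/-- The bivariate generating function Q(x,y) = ∑ q(n,m) xⁿ yᵐ, with `x` the
variable `0` and `y` the variable `1`. -/
noncomputable def Qser : MvPowerSeries (Fin 2) ℚ := fun d => (q (d 0) (d 1) : ℚ)

/-! automaton -/

inductive MSym : Type
  | u1 | u2 | s
deriving DecidableEq

open MSym

def stepL : Bool → List MSym → List MSym
  | true, [] => [u1]
  | true, u1 :: t => u2 :: t
  | true, u2 :: t => t
  | true, s :: t => u1 :: s :: t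
  | false, [] => [s]
  | false, s :: t => t
  | false, u1 :: t => s :: u1 :: t
  | false, u2 :: t => s :: u2 :: t

def runL (l : List Bool) (st : List MSym) : List MSym := l.foldr stepL st

@[simp] lemma runL_nil (st : List MSym) : runL [] st = st := rfl
@[simp] lemma runL_cons (b : Bool) (l : List Bool) (st : List MSym) :
    runL (b :: l) st = stepL b (runL l st) := rfl
lemma runL_append (l₁ l₂ : List Bool) (st : List MSym) :
    runL (l₁ ++ l₂) st = runL l₁ (runL l₂ st) := List.foldr_append

/-! group interpretation -/

def interp : MSym → ModularGroup'
  | u1 => letterΓ true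
  | u2 => letterΓ true ^ 2
  | s => letterΓ false

def elemS (st : List MSym) : ModularGroup' := (st.map interp).prod

lemma relU : letterΓ true ^ 3 = 1 := by
  have : letterΓ true ^ 3 = PresentedGroup.mk modularRels (FreeGroup.of true ^ 3) := by
    simp [letterΓ, PresentedGroup.of]
  rw [this]
  exact (QuotientGroup.eq_one_iff _).mpr
    (Subgroup.subset_normalClosure (by simp [modularRels]))

lemma relS : letterΓ false ^ 2 = 1 := by
  have : letterΓ false ^ 2 = PresentedGroup.mk modularRels (FreeGroup.of false ^ 2) := by
    simp [letterΓ, PresentedGroup.of]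
  rw [this]
  exact (QuotientGroup.eq_one_iff _).mpr
    (Subgroup.subset_normalClosure (by simp [modularRels]))

lemma elem_stepL (b : Bool) (st : List MSym) :
    elemS (stepL b st) = letterΓ b * elemS st := by
  have hU := relU
  have hS := relS
  cases b <;> rcases st with _ | ⟨a, t⟩ <;> try cases a
  all_goals simp only [stepL, elemS, List.map_cons, List.map_nil, List.prod_cons,
    List.prod_nil, interp]
  all_goals try group
  · rw [← sq, hS, one_mul]
  · rw [← sq]; rfl
  · have : letterΓ true ^ (3:ℤ) = 1 := by rw [← zpow_natCast] at hU; exact_mod_cast hU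
    rw [this, one_mul]

lemma wordProd_nil : wordProd [] = 1 := rfl
lemma wordProd_cons (b : Bool) (l : List Bool) :
    wordProd (b :: l) = letterΓ b * wordProd l := by
  simp [wordProd]

lemma elem_runL (l : List Bool) (st : List MSym) :
    elemS (runL l st) = wordProd l * elemS st := by
  induction l with
  | nil => simp [wordProd_nil]
  | cons b l ih => rw [runL_cons, elem_stepL, ih, wordProd_cons, mul_assoc]

def isU : MSym → Bool
  | u1 => true
  | u2 => true
  | s => false

def Alt (st : List MSym) : Prop := st.Chain' (fun a b => isU a ≠ isU b)

lemma alt_nil : Alt [] := List.isChain_nil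

lemma alt_stepL (b : Bool) {st : List MSym} (h : Alt st) : Alt (stepL b st) := by
  cases b <;> rcases st with _ | ⟨a, _ | ⟨a', t⟩⟩ <;> try cases a
  all_goals try cases a'
  all_goals simp_all [stepL, Alt, List.Chain', List.isChain_cons_cons, isU]

lemma stepS2 {st : List MSym} (h : Alt st) : stepL false (stepL false st) = st := by
  rcases st with _ | ⟨a, _ | ⟨a', t⟩⟩ <;> try cases a
  all_goals try cases a'
  all_goals simp_all [stepL, Alt, List.Chain', List.isChain_cons_cons, isU]

lemma stepU3 {st : List MSym} (h : Alt st) :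
    stepL true (stepL true (stepL true st)) = st := by
  rcases st with _ | ⟨a, _ | ⟨a', t⟩⟩ <;> try cases a
  all_goals try cases a'
  all_goals simp_all [stepL, Alt, List.Chain', List.isChain_cons_cons, isU]

def NS := {st : List MSym // Alt st}

def permU : Equiv.Perm NS where
  toFun st := ⟨stepL true st.1, alt_stepL _ st.2⟩
  invFun st := ⟨stepL true (stepL true st.1), alt_stepL _ (alt_stepL _ st.2)⟩
  left_inv st := Subtype.ext (stepU3 st.2)
  right_inv st := Subtype.ext (stepU3 st.2)

def permS : Equiv.Perm NS where
  toFun st := ⟨stepL false st.1, alt_stepL _ st.2⟩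
  invFun st := ⟨stepL false st.1, alt_stepL _ st.2⟩
  left_inv st := Subtype.ext (stepS2 st.2)
  right_inv st := Subtype.ext (stepS2 st.2)

def permB : Bool → Equiv.Perm NS
  | true => permU
  | false => permS

lemma permB_rels : ∀ r ∈ modularRels, FreeGroup.lift permB r = 1 := by
  intro r hr
  rcases hr with h | h <;> subst h <;> rw [map_pow, FreeGroup.lift_apply_of] <;> ext st
  · have : ((permB true) ^ 3) st = permU (permU (permU st)) := by
      rw [pow_succ, pow_succ, pow_one]; rfl
    rw [this, Equiv.Perm.one_apply]
    exact Subtype.ext (stepU3 st.2)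
  · have : ((permB false) ^ 2) st = permS (permS st) := by
      rw [pow_two]; rfl
    rw [this, Equiv.Perm.one_apply]
    exact Subtype.ext (stepS2 st.2)

noncomputable def Φ : ModularGroup' →* Equiv.Perm NS := PresentedGroup.toGroup permB_rels

lemma Φ_word (l : List Bool) (st : NS) : (Φ (wordProd l) st).1 = runL l st.1 := by
  induction l with
  | nil => rw [wordProd_nil, map_one]; rfl
  | cons b l ih =>
      rw [wordProd_cons, map_mul, runL_cons, ← ih]
      have hb : Φ (letterΓ b) = permB b := PresentedGroup.toGroup.of permB_rels
      rw [Equiv.Perm.mul_apply, hb]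
      cases b <;> rfl

lemma wordProd_eq_one_iff (l : List Bool) : wordProd l = 1 ↔ runL l [] = [] := by
  constructor
  · intro h
    have := Φ_word l ⟨[], alt_nil⟩
    rw [h, map_one] at this
    exact this.symm
  · intro h
    have := elem_runL l []
    rw [h] at this
    simpa [elemS] using this.symm

/-! first-pop machinery -/

def FPop (σ : MSym) (l : List Bool) : Prop :=
  runL l [σ] = [] ∧ ∀ l', l' <:+ l → l' ≠ l → runL l' [σ] ≠ []

lemma ne_of_length_lt {α : Type*} {a b : List α} (h : a.length < b.length) : a ≠ b :=
  fun he => by subst he; exact lt_irrefl _ h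

lemma suffix_append_left {α : Type*} {w' w : List α} (h : w' <:+ w) (u : List α) :
    w' ++ u <:+ w ++ u := by
  obtain ⟨p, rfl⟩ := h
  exact ⟨p, by rw [List.append_assoc]⟩

lemma suffix_append_cases {α : Type*} {l' x y : List α} (h : l' <:+ x ++ y) :
    l' <:+ y ∨ ∃ x', x' <:+ x ∧ l' = x' ++ y := by
  induction x with
  | nil => exact Or.inl h
  | cons a xs ih =>
      rw [List.cons_append, List.suffix_cons_iff] at h
      rcases h with h | h
      · exact Or.inr ⟨a :: xs, List.suffix_rfl, h⟩
      · rcases ih h with h | ⟨x', hx', rfl⟩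
        · exact Or.inl h
        · exact Or.inr ⟨x', hx'.trans (List.suffix_cons a xs), rfl⟩

lemma stepL_append {st : List MSym} (h : st ≠ []) (b : Bool) (t : List MSym) :
    stepL b (st ++ t) = stepL b st ++ t := by
  rcases st with _ | ⟨a, r⟩
  · exact absurd rfl h
  · cases b <;> cases a <;> rfl

lemma runL_append_base {l : List Bool} {st : List MSym}
    (h : ∀ l', l' <:+ l → l' ≠ l → runL l' st ≠ []) (t : List MSym) :
    runL l (st ++ t) = runL l st ++ t := by
  induction l with
  | nil => rfl
  | cons b l ih =>
      have hl : ∀ l', l' <:+ l → l' ≠ l → runL l' st ≠ [] := by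
        intro l' hs hne
        exact h l' (hs.trans (List.suffix_cons b l)) (ne_of_length_lt
          (lt_of_le_of_lt hs.length_le (by simp)))
      rw [runL_cons, runL_cons, ih hl,
        stepL_append (h l (List.suffix_cons b l) (ne_of_length_lt (by simp)))]

lemma exists_fpop_split {σ : MSym} {l : List Bool}
    (hex : ∃ l', l' <:+ l ∧ runL l' [σ] = []) :
    ∃ l₁ l₂, l = l₁ ++ l₂ ∧ FPop σ l₂ := by
  induction l with
  | nil =>
      obtain ⟨l', hs, hr⟩ := hex
      rw [List.suffix_nil] at hs
      subst hs
      simp [runL] at hr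
  | cons b l ih =>
      by_cases hex' : ∃ l', l' <:+ l ∧ runL l' [σ] = []
      · obtain ⟨l₁, l₂, rfl, h₂⟩ := ih hex'
        exact ⟨b :: l₁, l₂, rfl, h₂⟩
      · push_neg at hex'
        obtain ⟨l', hs, hr⟩ := hex
        rw [List.suffix_cons_iff] at hs
        rcases hs with rfl | hs
        · refine ⟨[], b :: l, rfl, hr, ?_⟩
          intro l'' hs'' hne''
          rw [List.suffix_cons_iff] at hs''
          rcases hs'' with rfl | hs''
          · exact absurd rfl hne''
          · exact hex' l'' hs''
        · exact absurd hr (hex' l' hs)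

lemma runL_fpop {σ : MSym} {l₂ : List Bool} (h : FPop σ l₂) (l₁ : List Bool) (t : List MSym) :
    runL (l₁ ++ l₂) (σ :: t) = runL l₁ t := by
  rw [runL_append]
  congr 1
  have : (σ :: t : List MSym) = [σ] ++ t := rfl
  rw [this, runL_append_base h.2, h.1, List.nil_append]

lemma fpop_unique {σ : MSym} {l₁ l₂ m₁ m₂ : List Bool} (h₂ : FPop σ l₂) (h₂' : FPop σ m₂)
    (he : l₁ ++ l₂ = m₁ ++ m₂) : l₁ = m₁ ∧ l₂ = m₂ := by
  have hs₂ : l₂ <:+ m₁ ++ m₂ := he ▸ (List.suffix_append l₁ l₂)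
  have hs₂' : m₂ <:+ m₁ ++ m₂ := List.suffix_append m₁ m₂
  have heq : l₂ = m₂ := by
    rcases List.suffix_or_suffix_of_suffix hs₂ hs₂' with h | h
    · by_contra hne
      exact h₂'.2 l₂ h hne h₂.1
    · by_contra hne
      exact h₂.2 m₂ h (fun he' => hne he'.symm) h₂'.1
  subst heq
  exact ⟨List.append_cancel_right he, rfl⟩

lemma fpop_ne_nil {σ : MSym} {l : List Bool} (h : FPop σ l) : l ≠ [] := by
  intro hl
  subst hl
  exact absurd h.1 (by simp [runL])

/-! builders -/

lemma fpop_single {σ : MSym} {b : Bool} (hb : stepL b [σ] = []) : FPop σ [b] := by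
  refine ⟨by simp [runL, hb], ?_⟩
  intro l' hs hne
  rw [List.suffix_cons_iff] at hs
  rcases hs with rfl | hs
  · exact absurd rfl hne
  · rw [List.suffix_nil] at hs
    subst hs
    simp [runL]

lemma fpop_replace {σ σ' : MSym} {b : Bool} (hb : stepL b [σ] = [σ']) {w : List Bool}
    (hw : FPop σ' w) : FPop σ (w ++ [b]) := by
  have hrun : ∀ w' : List Bool, runL (w' ++ [b]) [σ] = runL w' [σ'] := by
    intro w'
    rw [runL_append]
    simp [runL, hb]
  refine ⟨by rw [hrun, hw.1], ?_⟩
  intro l' hs hne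
  rcases suffix_append_cases hs with hs' | ⟨w', hw', rfl⟩
  · rw [List.suffix_cons_iff] at hs'
    rcases hs' with rfl | hs'
    · simp [runL, hb]
    · rw [List.suffix_nil] at hs'
      subst hs'
      simp [runL]
  · have hne' : w' ≠ w := fun he => hne (by rw [he])
    rw [hrun]
    exact hw.2 w' hw' hne'

lemma fpop_push {σ τ : MSym} {b : Bool} (hb : stepL b [σ] = [τ, σ]) {w v : List Bool}
    (hw : FPop σ w) (hv : FPop τ v) : FPop σ (w ++ v ++ [b]) := by
  have hvb : ∀ u : List Bool, runL (u ++ (v ++ [b])) [σ] = runL u [σ] := by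
    intro u
    rw [runL_append, runL_append]
    have h1 : runL [b] [σ] = [τ, σ] := by simp [runL, hb]
    rw [h1, show ([τ, σ] : List MSym) = τ :: [σ] from rfl]
    have h2 := runL_fpop hv ([] : List Bool) [σ]
    rw [List.nil_append] at h2
    rw [h2]
    rfl
  constructor
  · rw [List.append_assoc, hvb, hw.1]
  · intro l' hs hne
    rw [List.append_assoc] at hs
    rcases suffix_append_cases hs with hs' | ⟨w', hw', rfl⟩
    · -- suffix of v ++ [b]
      rcases suffix_append_cases hs' with hs'' | ⟨v', hv', rfl⟩
      · -- suffix of [b]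
        rw [List.suffix_cons_iff] at hs''
        rcases hs'' with rfl | hs''
        · simp [runL, hb]
        · rw [List.suffix_nil] at hs''
          subst hs''
          simp [runL]
      · -- l' = v' ++ [b]
        have h1 : runL (v' ++ [b]) [σ] = runL v' [τ, σ] := by
          rw [runL_append]; simp [runL, hb]
        rw [h1]
        by_cases hveq : v' = v
        · subst hveq
          rw [show ([τ, σ] : List MSym) = τ :: [σ] from rfl,
            show runL v' (τ :: [σ]) = runL ([] ++ v') (τ :: [σ]) by rw [List.nil_append],
            runL_fpop hv [] [σ]]
          simp
        · have hmin : ∀ l'', l'' <:+ v' → l'' ≠ v' → runL l'' [τ] ≠ [] := by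
            intro l'' hs'' hne''
            exact hv.2 l'' (hs''.trans hv') (ne_of_length_lt
              (lt_of_le_of_lt hs''.length_le (Nat.lt_of_le_of_ne hv'.length_le
                (fun he => hveq (hv'.eq_of_length he)))))
          rw [show ([τ, σ] : List MSym) = [τ] ++ [σ] from rfl, runL_append_base hmin]
          simp
    · -- l' = w' ++ (v ++ [b])
      have hne' : w' ≠ w := fun he => hne (by rw [he, List.append_assoc])
      rw [hvb]
      exact hw.2 w' hw' hne'

/-! destructors -/

lemma fpop_case_pop {σ : MSym} {b : Bool} {l₁ : List Bool} (h : FPop σ (l₁ ++ [b]))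
    (hb : stepL b [σ] = []) : l₁ = [] := by
  by_contra hne
  refine h.2 [b] (List.suffix_append l₁ [b]) ?_ (by simp [runL, hb])
  intro he
  have hlen := congrArg List.length he
  simp only [List.length_append, List.length_cons, List.length_nil] at hlen
  exact hne (List.length_eq_zero_iff.mp (by omega))

lemma fpop_case_replace {σ σ' : MSym} {b : Bool} {l₁ : List Bool} (h : FPop σ (l₁ ++ [b]))
    (hb : stepL b [σ] = [σ']) : FPop σ' l₁ := by
  have hrun : ∀ w' : List Bool, runL (w' ++ [b]) [σ] = runL w' [σ'] := by
    intro w'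
    rw [runL_append]; simp [runL, hb]
  constructor
  · rw [← hrun, h.1]
  · intro l' hs hne
    rw [← hrun]
    exact h.2 (l' ++ [b]) (suffix_append_left hs [b])
      (fun he => hne (List.append_cancel_right he))

lemma fpop_case_push {σ τ : MSym} {b : Bool} {l₁ : List Bool} (h : FPop σ (l₁ ++ [b]))
    (hb : stepL b [σ] = [τ, σ]) :
    ∃ w v, l₁ = w ++ v ∧ FPop σ w ∧ FPop τ v := by
  have hrun : runL (l₁ ++ [b]) [σ] = runL l₁ [τ, σ] := by
    rw [runL_append]; simp [runL, hb]
  have hex : ∃ l', l' <:+ l₁ ∧ runL l' [τ] = [] := by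
    by_contra hno
    push_neg at hno
    have hmin : ∀ l', l' <:+ l₁ → l' ≠ l₁ → runL l' [τ] ≠ [] := fun l' hs _ => hno l' hs
    have := runL_append_base (l := l₁) (st := [τ]) hmin [σ]
    rw [show ([τ] ++ [σ] : List MSym) = [τ, σ] from rfl] at this
    have h0 : runL l₁ [τ, σ] = [] := by rw [← hrun, h.1]
    rw [this] at h0
    exact absurd h0 (by simp)
  obtain ⟨w, v, rfl, hv⟩ := exists_fpop_split hex
  have hwrun : ∀ w' : List Bool, runL ((w' ++ v) ++ [b]) [σ] = runL w' [σ] := by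
    intro w'
    rw [runL_append, show runL [b] [σ] = [τ, σ] by simp [runL, hb],
      show ([τ, σ] : List MSym) = τ :: [σ] from rfl, runL_fpop hv w' [σ]]
  refine ⟨w, v, rfl, ⟨?_, ?_⟩, hv⟩
  · rw [← hwrun, h.1]
  · intro w' hs hne
    rw [← hwrun]
    refine h.2 ((w' ++ v) ++ [b]) ?_ ?_
    · exact suffix_append_left (suffix_append_left hs v) [b]
    · refine ne_of_length_lt ?_
      have hlt : w'.length < w.length :=
        Nat.lt_of_le_of_ne hs.length_le (fun he => hne (hs.eq_of_length he))
      simp only [List.length_append]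
      omega

lemma z_run_concat {b : Bool} {τ : MSym} (hb : stepL b [] = [τ]) (l₁ : List Bool) :
    runL (l₁ ++ [b]) [] = runL l₁ [τ] := by
  rw [runL_append]; simp [runL, hb]

lemma z_case {b : Bool} {τ : MSym} {l₁ : List Bool} (h : runL (l₁ ++ [b]) [] = [])
    (hb : stepL b [] = [τ]) : ∃ z v, l₁ = z ++ v ∧ runL z [] = [] ∧ FPop τ v := by
  rw [z_run_concat hb] at h
  obtain ⟨z, v, rfl, hv⟩ := exists_fpop_split ⟨l₁, List.suffix_rfl, h⟩
  refine ⟨z, v, rfl, ?_, hv⟩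
  have h2 := runL_fpop hv z ([] : List MSym)
  rw [← h2]
  exact h

lemma z_build {b : Bool} {τ : MSym} {z v : List Bool} (hz : runL z [] = [])
    (hv : FPop τ v) (hb : stepL b [] = [τ]) : runL (z ++ v ++ [b]) [] = [] := by
  rw [List.append_assoc, ← List.append_assoc, z_run_concat hb (z ++ v), runL_fpop hv z, hz]

/-! the grammar sets -/

def SA : Set (List Bool) := {l | FPop u1 l}
def SB : Set (List Bool) := {l | FPop u2 l}
def SC : Set (List Bool) := {l | FPop MSym.s l}
def SZ : Set (List Bool) := {l | runL l [] = []}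

def cat (S T : Set (List Bool)) : Set (List Bool) :=
  (fun p : List Bool × List Bool => p.1 ++ p.2) '' (S ×ˢ T)

lemma mem_cat {S T : Set (List Bool)} {x y : List Bool} (hx : x ∈ S) (hy : y ∈ T) :
    x ++ y ∈ cat S T := ⟨(x, y), ⟨hx, hy⟩, rfl⟩

lemma mem_cat_elim {S T : Set (List Bool)} {l : List Bool} (h : l ∈ cat S T) :
    ∃ x ∈ S, ∃ y ∈ T, l = x ++ y := by
  obtain ⟨⟨x, y⟩, ⟨hx, hy⟩, rfl⟩ := h
  exact ⟨x, hx, y, hy, rfl⟩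

lemma SB_eq : SB = {[true]} ∪ cat (cat SB SC) {[false]} := by
  ext l
  constructor
  · intro hl
    rcases List.eq_nil_or_concat' l with rfl | ⟨l₁, b, rfl⟩
    · exact absurd rfl (fpop_ne_nil hl)
    · cases b
      · -- false : push s
        obtain ⟨w, v, rfl, hw, hv⟩ := fpop_case_push hl rfl
        exact Or.inr (mem_cat (mem_cat hw hv) rfl)
      · -- true : pop
        have h0 := fpop_case_pop hl rfl
        subst h0
        exact Or.inl rfl
  · rintro (rfl | h)
    · exact fpop_single rfl
    · obtain ⟨p, hp, y, hy, rfl⟩ := mem_cat_elim h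
      obtain ⟨w, hw, v, hv, rfl⟩ := mem_cat_elim hp
      rcases hy with rfl
      exact fpop_push (show stepL false [u2] = [MSym.s, u2] from rfl) hw hv

lemma SA_eq : SA = cat SB {[true]} ∪ cat (cat SA SC) {[false]} := by
  ext l
  constructor
  · intro hl
    rcases List.eq_nil_or_concat' l with rfl | ⟨l₁, b, rfl⟩
    · exact absurd rfl (fpop_ne_nil hl)
    · cases b
      · obtain ⟨w, v, rfl, hw, hv⟩ := fpop_case_push hl rfl
        exact Or.inr (mem_cat (mem_cat hw hv) rfl)
      · exact Or.inl (mem_cat (fpop_case_replace hl rfl) rfl)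
  · rintro (h | h)
    · obtain ⟨w, hw, y, hy, rfl⟩ := mem_cat_elim h
      rcases hy with rfl
      exact fpop_replace (show stepL true [u1] = [u2] from rfl) hw
    · obtain ⟨p, hp, y, hy, rfl⟩ := mem_cat_elim h
      obtain ⟨w, hw, v, hv, rfl⟩ := mem_cat_elim hp
      rcases hy with rfl
      exact fpop_push (show stepL false [u1] = [MSym.s, u1] from rfl) hw hv

lemma SC_eq : SC = {[false]} ∪ cat (cat SC SA) {[true]} := by
  ext l
  constructor
  · intro hl
    rcases List.eq_nil_or_concat' l with rfl | ⟨l₁, b, rfl⟩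
    · exact absurd rfl (fpop_ne_nil hl)
    · cases b
      · have h0 := fpop_case_pop hl rfl
        subst h0
        exact Or.inl rfl
      · obtain ⟨w, v, rfl, hw, hv⟩ := fpop_case_push hl rfl
        exact Or.inr (mem_cat (mem_cat hw hv) rfl)
  · rintro (rfl | h)
    · exact fpop_single rfl
    · obtain ⟨p, hp, y, hy, rfl⟩ := mem_cat_elim h
      obtain ⟨w, hw, v, hv, rfl⟩ := mem_cat_elim hp
      rcases hy with rfl
      exact fpop_push (show stepL true [MSym.s] = [u1, MSym.s] from rfl) hw hv

lemma SZ_eq : SZ = {([] : List Bool)} ∪ (cat (cat SZ SA) {[true]} ∪ cat (cat SZ SC) {[false]}) := by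
  ext l
  constructor
  · intro hl
    rcases List.eq_nil_or_concat' l with rfl | ⟨l₁, b, rfl⟩
    · exact Or.inl rfl
    · cases b
      · obtain ⟨z, v, rfl, hz, hv⟩ := z_case hl rfl
        exact Or.inr (Or.inr (mem_cat (mem_cat hz hv) rfl))
      · obtain ⟨z, v, rfl, hz, hv⟩ := z_case hl rfl
        exact Or.inr (Or.inl (mem_cat (mem_cat hz hv) rfl))
  · rintro (rfl | (h | h))
    · rfl
    · obtain ⟨p, hp, y, hy, rfl⟩ := mem_cat_elim h
      obtain ⟨z, hz, v, hv, rfl⟩ := mem_cat_elim hp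
      rcases hy with rfl
      exact z_build hz hv rfl
    · obtain ⟨p, hp, y, hy, rfl⟩ := mem_cat_elim h
      obtain ⟨z, hz, v, hv, rfl⟩ := mem_cat_elim hp
      rcases hy with rfl
      exact z_build hz hv rfl

/-! generating functions -/

noncomputable def cnt (l : List Bool) : Fin 2 →₀ ℕ :=
  Finsupp.single 0 (l.count true) + Finsupp.single 1 (l.count false)

lemma cnt_apply_zero (l : List Bool) : cnt l 0 = l.count true := by
  simp [cnt, Finsupp.single_apply]

lemma cnt_apply_one (l : List Bool) : cnt l 1 = l.count false := by
  simp [cnt, Finsupp.single_apply]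

lemma cnt_eq_iff {l : List Bool} {d : Fin 2 →₀ ℕ} :
    cnt l = d ↔ l.count true = d 0 ∧ l.count false = d 1 := by
  constructor
  · rintro rfl
    exact ⟨(cnt_apply_zero l).symm, (cnt_apply_one l).symm⟩
  · rintro ⟨h0, h1⟩
    ext i
    fin_cases i
    · show cnt l 0 = d 0
      rw [cnt_apply_zero, h0]
    · show cnt l 1 = d 1
      rw [cnt_apply_one, h1]

lemma cnt_append (x y : List Bool) : cnt (x ++ y) = cnt x + cnt y := by
  simp only [cnt, List.count_append, Finsupp.single_add]
  abel

lemma cnt_nil : cnt [] = 0 := by simp [cnt]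

lemma cnt_single_true : cnt [true] = Finsupp.single 0 1 := by
  simp [cnt]

lemma cnt_single_false : cnt [false] = Finsupp.single 1 1 := by
  simp [cnt]

lemma length_le_cnt (l : List Bool) : l.length = l.count true + l.count false := by
  induction l with
  | nil => simp
  | cons b l ih =>
      have h := ih
      cases b <;> simp [List.count_cons] <;> omega

noncomputable def gf (S : Set (List Bool)) : MvPowerSeries (Fin 2) ℚ :=
  fun d => ((S ∩ {l | cnt l = d}).ncard : ℚ)

lemma coeff_gf (S : Set (List Bool)) (d : Fin 2 →₀ ℕ) :
    MvPowerSeries.coeff d (gf S) = ((S ∩ {l | cnt l = d}).ncard : ℚ) := rfl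

lemma finite_cntSet (d : Fin 2 →₀ ℕ) : {l : List Bool | cnt l = d}.Finite := by
  apply (List.finite_length_eq Bool (d 0 + d 1)).subset
  intro l hl
  have h := cnt_eq_iff.mp hl
  simp only [Set.mem_setOf_eq, length_le_cnt, h.1, h.2]

lemma finite_inter (S : Set (List Bool)) (d : Fin 2 →₀ ℕ) :
    (S ∩ {l | cnt l = d}).Finite :=
  (finite_cntSet d).subset Set.inter_subset_right

lemma gf_union {S T : Set (List Bool)} (h : Disjoint S T) :
    gf (S ∪ T) = gf S + gf T := by
  apply MvPowerSeries.ext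
  intro d
  rw [map_add, coeff_gf, coeff_gf, coeff_gf, Set.union_inter_distrib_right,
    Set.ncard_union_eq (h.mono Set.inter_subset_left Set.inter_subset_left)
      (finite_inter S d) (finite_inter T d), Nat.cast_add]

lemma gf_nil : gf {([] : List Bool)} = 1 := by
  classical
  apply MvPowerSeries.ext
  intro d
  rw [coeff_gf, MvPowerSeries.coeff_one]
  by_cases hd : d = 0
  · subst hd
    rw [if_pos rfl]
    have : ({([] : List Bool)} ∩ {l | cnt l = 0}) = {([] : List Bool)} := by
      apply Set.inter_eq_self_of_subset_left
      rintro l rfl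
      exact cnt_nil
    rw [this, Set.ncard_singleton, Nat.cast_one]
  · rw [if_neg hd]
    have : ({([] : List Bool)} ∩ {l | cnt l = d}) = ∅ := by
      ext l
      simp only [Set.mem_inter_iff, Set.mem_singleton_iff, Set.mem_setOf_eq,
        Set.mem_empty_iff_false, iff_false, not_and]
      rintro rfl h
      exact hd (cnt_nil ▸ h.symm)
    rw [this, Set.ncard_empty, Nat.cast_zero]

lemma gf_single (b : Bool) :
    gf {[b]} = MvPowerSeries.X (if b then (0 : Fin 2) else 1) := by
  classical
  apply MvPowerSeries.ext
  intro d
  rw [coeff_gf, MvPowerSeries.coeff_X]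
  have hc : cnt [b] = Finsupp.single (if b then (0 : Fin 2) else 1) 1 := by
    cases b
    · exact cnt_single_false
    · exact cnt_single_true
  by_cases hd : d = Finsupp.single (if b then (0 : Fin 2) else 1) 1
  · subst hd
    rw [if_pos rfl]
    have : ({[b]} ∩ {l | cnt l = Finsupp.single (if b then (0 : Fin 2) else 1) 1})
        = {[b]} := by
      apply Set.inter_eq_self_of_subset_left
      rintro l rfl
      exact hc
    rw [this, Set.ncard_singleton, Nat.cast_one]
  · rw [if_neg hd]
    have : ({[b]} ∩ {l | cnt l = d}) = ∅ := by
      ext l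
      simp only [Set.mem_inter_iff, Set.mem_singleton_iff, Set.mem_setOf_eq,
        Set.mem_empty_iff_false, iff_false, not_and]
      rintro rfl h
      exact hd (hc ▸ h.symm)
    rw [this, Set.ncard_empty, Nat.cast_zero]

lemma gf_cat {S T : Set (List Bool)}
    (hinj : Set.InjOn (fun p : List Bool × List Bool => p.1 ++ p.2) (S ×ˢ T)) :
    gf (cat S T) = gf S * gf T := by
  classical
  apply MvPowerSeries.ext
  intro d
  rw [MvPowerSeries.coeff_mul, coeff_gf]
  have key : (cat S T ∩ {l | cnt l = d}).ncard
      = ∑ p ∈ Finset.HasAntidiagonal.antidiagonal d,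
          (S ∩ {l | cnt l = p.1}).ncard * (T ∩ {l | cnt l = p.2}).ncard := by
    rw [show (cat S T ∩ {l | cnt l = d}).ncard = Nat.card ↥(cat S T ∩ {l | cnt l = d})
      from (Nat.card_coe_set_eq _).symm]
    haveI iS : ∀ e, Fintype ↥(S ∩ {l | cnt l = e}) := fun e => (finite_inter S e).fintype
    haveI iT : ∀ e, Fintype ↥(T ∩ {l | cnt l = e}) := fun e => (finite_inter T e).fintype
    let Idx := (Finset.HasAntidiagonal.antidiagonal d : Finset ((Fin 2 →₀ ℕ) × (Fin 2 →₀ ℕ)))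
    let Fib : Idx → Type := fun p =>
      ↥(S ∩ {l | cnt l = p.1.1}) × ↥(T ∩ {l | cnt l = p.1.2})
    haveI iF : ∀ p : Idx, Fintype (Fib p) := fun p => instFintypeProd _ _
    let F : (Σ p : Idx, Fib p) → ↥(cat S T ∩ {l | cnt l = d}) := fun x =>
      ⟨x.2.1.1 ++ x.2.2.1,
        mem_cat x.2.1.2.1 x.2.2.2.1, by
        have h1 : cnt x.2.1.1 = x.1.1.1 := x.2.1.2.2
        have h2 : cnt x.2.2.1 = x.1.1.2 := x.2.2.2.2
        have h3 : x.1.1.1 + x.1.1.2 = d := Finset.HasAntidiagonal.mem_antidiagonal.mp x.1.2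
        show cnt (x.2.1.1 ++ x.2.2.1) = d
        rw [cnt_append, h1, h2, h3]⟩
    have hFbij : Function.Bijective F := by
      constructor
      · rintro ⟨⟨p, hp⟩, ⟨x, hx⟩, ⟨y, hy⟩⟩ ⟨⟨p', hp'⟩, ⟨x', hx'⟩, ⟨y', hy'⟩⟩ h
        have hval : x ++ y = x' ++ y' := congrArg Subtype.val h
        have hxy : (x, y) = (x', y') :=
          hinj (Set.mk_mem_prod hx.1 hy.1) (Set.mk_mem_prod hx'.1 hy'.1) hval
        have hx2 : x = x' := congrArg Prod.fst hxy
        have hy2 : y = y' := congrArg Prod.snd hxy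
        subst hx2; subst hy2
        have hpp : p = p' := by
          have e1 : p.1 = p'.1 := by rw [← hx.2, ← hx'.2]
          have e2 : p.2 = p'.2 := by rw [← hy.2, ← hy'.2]
          exact Prod.ext e1 e2
        subst hpp
        rfl
      · rintro ⟨l, hl, hcnt⟩
        obtain ⟨x, hx, y, hy, rfl⟩ := mem_cat_elim hl
        have hmem : (cnt x, cnt y) ∈ Finset.HasAntidiagonal.antidiagonal d := by
          rw [Finset.HasAntidiagonal.mem_antidiagonal, ← cnt_append]
          exact hcnt
        exact ⟨⟨⟨(cnt x, cnt y), hmem⟩, ⟨x, hx, rfl⟩, ⟨y, hy, rfl⟩⟩, rfl⟩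
    rw [(Nat.card_eq_of_bijective F hFbij).symm, Nat.card_eq_fintype_card,
      Fintype.card_sigma]
    have hfib : ∀ p : Idx, Fintype.card (Fib p)
        = (S ∩ {l | cnt l = p.1.1}).ncard * (T ∩ {l | cnt l = p.1.2}).ncard := by
      intro p
      rw [← Nat.card_eq_fintype_card]
      show Nat.card (↥(S ∩ {l | cnt l = p.1.1}) × ↥(T ∩ {l | cnt l = p.1.2})) = _
      rw [Nat.card_prod, Nat.card_coe_set_eq, Nat.card_coe_set_eq]
    rw [← Finset.sum_coe_sort (Finset.HasAntidiagonal.antidiagonal d)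
      (fun p => (S ∩ {l | cnt l = p.1}).ncard * (T ∩ {l | cnt l = p.2}).ncard)]
    exact Finset.sum_congr rfl fun p _ => hfib p
  rw [key]
  push_cast
  rfl

/-! algebra -/

lemma cubic_of_system {R : Type*} [CommRing R] [NoZeroDivisors R] (x y a b c Q : R)
    (hb : b = x + b * c * y) (ha : a = b * x + a * c * y)
    (hc : c = y + c * a * x) (hz : Q = 1 + (Q * a * x + Q * c * y))
    (hQ : Q ≠ 0) (hy : y ≠ 0) :
    (y ^ 6 - x ^ 6 + 6 * y ^ 2 * x ^ 3 - 3 * y ^ 4 + 2 * x ^ 3 + 3 * y ^ 2 - 1) * Q ^ 3 +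
      (x ^ 3 * y ^ 2 - y ^ 4 + x ^ 3 + 2 * y ^ 2 - 1) * Q ^ 2 +
      (x ^ 3 - y ^ 2 + 1) * Q + 1 = 0 := by
  have hA : a * (1 - c * y) ^ 2 = x ^ 2 := by
    linear_combination (1 - c * y) * ha + x * hb
  have hB : (c - y) * (1 - c * y) ^ 2 = c * x ^ 3 := by
    linear_combination (1 - c * y) ^ 2 * hc + c * x * hA
  have hC : Q * y * (1 - c ^ 2) = c := by
    linear_combination c * hz - Q * hc
  have hP : ((y ^ 6 - x ^ 6 + 6 * y ^ 2 * x ^ 3 - 3 * y ^ 4 + 2 * x ^ 3 + 3 * y ^ 2 - 1) * Q ^ 3 +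
      (x ^ 3 * y ^ 2 - y ^ 4 + x ^ 3 + 2 * y ^ 2 - 1) * Q ^ 2 +
      (x ^ 3 - y ^ 2 + 1) * Q + 1) * (Q ^ 2 * y ^ 5) = 0 := by
    linear_combination ((-1 : R) * y ^ 4 * Q ^ 2 + (-2 : R) * y ^ 4 * Q ^ 3 + (-1 : R) * y ^ 4 * Q ^ 4 + (-1 : R) * y ^ 5 * c * Q ^ 3 + (-2 : R) * y ^ 5 * c * Q ^ 4 + (-1 : R) * y ^ 5 * c * Q ^ 5 + (-1 : R) * y ^ 6 * Q ^ 3 + (-4 : R) * y ^ 6 * Q ^ 4 + (-3 : R) * y ^ 6 * Q ^ 5 + (-1 : R) * y ^ 7 * c * Q ^ 4 + (-3 : R) * y ^ 7 * c * Q ^ 5 + (-1 : R) * y ^ 8 * Q ^ 5 + (1 : R) * x ^ 3 * y ^ 4 * Q ^ 4 + (1 : R) * x ^ 3 * y ^ 5 * c * Q ^ 5) * hB + ((-1 : R) * y ^ 4 * Q ^ 2 + (-2 : R) * y ^ 4 * Q ^ 3 + (-1 : R) * y ^ 4 * Q ^ 4 + (2 : R) * y ^ 5 * c * Q ^ 2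 + (4 : R) * y ^ 5 * c * Q ^ 3 + (2 : R) * y ^ 5 * c * Q ^ 4 + (-2 : R) * y ^ 6 * Q ^ 2 + (-2 : R) * y ^ 6 * Q ^ 3 + (-1 : R) * y ^ 6 * c ^ 2 * Q ^ 2 + (-2 : R) * y ^ 6 * c ^ 2 * Q ^ 3 + (-1 : R) * y ^ 6 * c ^ 2 * Q ^ 4 + (1 : R) * y ^ 7 * c * Q ^ 2 + (3 : R) * y ^ 7 * c * Q ^ 3 + (4 : R) * y ^ 7 * c * Q ^ 4 + (-1 : R) * y ^ 8 * Q ^ 3 + (-4 : R) * y ^ 8 * Q ^ 4 + (-1 : R) * y ^ 8 * c ^ 2 * Q ^ 3 + (-3 : R) * y ^ 8 * c ^ 2 * Q ^ 4 + (1 : R) * y ^ 9 * c * Q ^ 3 + (2 : R) * y ^ 9 * c * Q ^ 4 + (1 : R) * y ^ 10 * Q ^ 4 + (1 : R) * x ^ 3 * y ^ 4 * Q ^ 2 + (2 : R) * x ^ 3 * y ^ 4 * Q ^ 3 + (2 : R) * x ^ 3 * y ^ 4 * Q ^ 4 + (-2 : R) * x ^ 3 * y ^ 5 * c * Q ^ 4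 + (1 : R) * x ^ 3 * y ^ 6 * Q ^ 3 + (6 : R) * x ^ 3 * y ^ 6 * Q ^ 4 + (1 : R) * x ^ 3 * y ^ 6 * c ^ 2 * Q ^ 4 + (-1 : R) * x ^ 3 * y ^ 7 * c * Q ^ 4 + (-1 : R) * x ^ 6 * y ^ 4 * Q ^ 4) * hC
  rcases mul_eq_zero.mp hP with h | h
  · exact h
  · exact absurd h (mul_ne_zero (pow_ne_zero _ hQ) (pow_ne_zero _ hy))

/-! series equations -/

lemma injOn_fpop {S T : Set (List Bool)} {σ : MSym} (hT : ∀ t ∈ T, FPop σ t) :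
    Set.InjOn (fun p : List Bool × List Bool => p.1 ++ p.2) (S ×ˢ T) := by
  rintro ⟨x, y⟩ ⟨hx, hy⟩ ⟨x', y'⟩ ⟨hx', hy'⟩ h
  obtain ⟨h1, h2⟩ := fpop_unique (hT y hy) (hT y' hy') h
  exact Prod.ext h1 h2

lemma injOn_single {S : Set (List Bool)} (w : List Bool) :
    Set.InjOn (fun p : List Bool × List Bool => p.1 ++ p.2)
      (S ×ˢ ({w} : Set (List Bool))) := by
  rintro ⟨x, y⟩ ⟨hx, hy⟩ ⟨x', y'⟩ ⟨hx', hy'⟩ h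
  rcases hy with rfl
  rcases hy' with rfl
  simp only at h
  exact Prod.ext (List.append_cancel_right h) rfl

lemma gf_single_true : gf {[true]} = MvPowerSeries.X 0 := gf_single true
lemma gf_single_false : gf {[false]} = MvPowerSeries.X 1 := gf_single false

lemma mem_cat_single {S : Set (List Bool)} {b : Bool} {l : List Bool}
    (h : l ∈ cat S {[b]}) : ∃ m, l = m ++ [b] := by
  obtain ⟨x, hx, y, hy, rfl⟩ := mem_cat_elim h
  rcases hy with rfl
  exact ⟨x, rfl⟩

lemma concat_ne_concat {m m' : List Bool} {b b' : Bool} (hb : b ≠ b') :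
    m ++ [b] ≠ m' ++ [b'] := by
  intro h
  have h1 : (m ++ [b]).getLast? = some b := by simp
  have h2 : (m' ++ [b']).getLast? = some b' := by simp
  rw [h, h2] at h1
  exact hb (Option.some.inj h1).symm

lemma disj_nil_cat {S : Set (List Bool)} {b : Bool} :
    Disjoint {([] : List Bool)} (cat S {[b]}) := by
  rw [Set.disjoint_left]
  rintro l rfl hr
  obtain ⟨m, hm⟩ := mem_cat_single hr
  exact List.append_ne_nil_of_right_ne_nil m (by simp) hm.symm

lemma disj_single_cat {S : Set (List Bool)} {b b' : Bool} (hb : b ≠ b') :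
    Disjoint ({[b]} : Set (List Bool)) (cat S {[b']}) := by
  rw [Set.disjoint_left]
  rintro l rfl hr
  obtain ⟨m, hm⟩ := mem_cat_single hr
  exact concat_ne_concat (m := []) hb hm

lemma disj_cat_cat {S T : Set (List Bool)} {b b' : Bool} (hb : b ≠ b') :
    Disjoint (cat S {[b]}) (cat T {[b']}) := by
  rw [Set.disjoint_left]
  intro l hl hr
  obtain ⟨m, rfl⟩ := mem_cat_single hl
  obtain ⟨m', hm'⟩ := mem_cat_single hr
  exact concat_ne_concat hb hm'

lemma hb_eq : gf SB = MvPowerSeries.X 0 + gf SB * gf SC * MvPowerSeries.X 1 := by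
  conv_lhs => rw [SB_eq]
  rw [gf_union (disj_single_cat (by simp)), gf_cat (injOn_single [false]),
    gf_cat (injOn_fpop (S := SB) (T := SC) (fun t ht => ht)), gf_single_true, gf_single_false]

lemma ha_eq : gf SA = gf SB * MvPowerSeries.X 0 + gf SA * gf SC * MvPowerSeries.X 1 := by
  conv_lhs => rw [SA_eq]
  rw [gf_union (disj_cat_cat (by simp)), gf_cat (injOn_single [false]),
    gf_cat (injOn_single [true]), gf_cat (injOn_fpop (S := SA) (T := SC) (fun t ht => ht)),
    gf_single_true, gf_single_false]

lemma hc_eq : gf SC = MvPowerSeries.X 1 + gf SC * gf SA * MvPowerSeries.X 0 := by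
  conv_lhs => rw [SC_eq]
  rw [gf_union (disj_single_cat (by simp)), gf_cat (injOn_single [true]),
    gf_cat (injOn_fpop (S := SC) (T := SA) (fun t ht => ht)), gf_single_true, gf_single_false]

lemma hz_eq : gf SZ = 1 + (gf SZ * gf SA * MvPowerSeries.X 0
    + gf SZ * gf SC * MvPowerSeries.X 1) := by
  conv_lhs => rw [SZ_eq]
  rw [gf_union (Set.disjoint_union_right.mpr ⟨disj_nil_cat, disj_nil_cat⟩),
    gf_union (disj_cat_cat (by simp)), gf_cat (injOn_single [true]),
    gf_cat (injOn_single [false]), gf_cat (injOn_fpop (S := SZ) (T := SA) (fun t ht => ht)),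
    gf_cat (injOn_fpop (S := SZ) (T := SC) (fun t ht => ht)), gf_nil, gf_single_true,
    gf_single_false]

lemma Qser_eq : Qser = gf SZ := by
  apply MvPowerSeries.ext
  intro d
  show (q (d 0) (d 1) : ℚ) = ((SZ ∩ {l | cnt l = d}).ncard : ℚ)
  congr 1
  rw [q, ← Nat.card_coe_set_eq]
  apply Nat.card_congr
  exact Equiv.subtypeEquivRight (fun l => by
    constructor
    · rintro ⟨h1, h2, h3⟩
      exact ⟨(wordProd_eq_one_iff l).mp h3, cnt_eq_iff.mpr ⟨h1, h2⟩⟩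
    · rintro ⟨h1, h2⟩
      obtain ⟨c1, c2⟩ := cnt_eq_iff.mp h2
      exact ⟨c1, c2, (wordProd_eq_one_iff l).mpr h1⟩)

lemma gfSZ_ne_zero : gf SZ ≠ 0 := by
  intro h
  have h0 : MvPowerSeries.coeff 0 (gf SZ) = 1 := by
    rw [coeff_gf]
    have he : SZ ∩ {l | cnt l = 0} = {[]} := by
      ext l
      simp only [Set.mem_inter_iff, Set.mem_setOf_eq, Set.mem_singleton_iff]
      constructor
      · rintro ⟨h1, h2⟩
        obtain ⟨c1, c2⟩ := cnt_eq_iff.mp h2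
        have hlen := length_le_cnt l
        simp only [Finsupp.coe_zero, Pi.zero_apply] at c1 c2
        rw [c1, c2] at hlen
        exact List.length_eq_zero_iff.mp hlen
      · rintro rfl
        exact ⟨rfl, cnt_nil⟩
    rw [he, Set.ncard_singleton, Nat.cast_one]
  rw [h, map_zero] at h0
  exact zero_ne_one h0

lemma X1_ne_zero : (MvPowerSeries.X 1 : MvPowerSeries (Fin 2) ℚ) ≠ 0 := by
  intro h
  have h0 : MvPowerSeries.coeff (Finsupp.single 1 1)
      (MvPowerSeries.X 1 : MvPowerSeries (Fin 2) ℚ) = 1 := by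
    classical
    rw [MvPowerSeries.coeff_X, if_pos rfl]
  rw [h, map_zero] at h0
  exact zero_ne_one h0

open MvPowerSeries in
theorem stmt9 :
    letI Xv : MvPowerSeries (Fin 2) ℚ := MvPowerSeries.X 0
    letI Yv : MvPowerSeries (Fin 2) ℚ := MvPowerSeries.X 1
    (Yv ^ 6 - Xv ^ 6 + 6 * Yv ^ 2 * Xv ^ 3 - 3 * Yv ^ 4 + 2 * Xv ^ 3 + 3 * Yv ^ 2 - 1) * Qser ^ 3 +
      (Xv ^ 3 * Yv ^ 2 - Yv ^ 4 + Xv ^ 3 + 2 * Yv ^ 2 - 1) * Qser ^ 2 +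
      (Xv ^ 3 - Yv ^ 2 + 1) * Qser + 1 = 0 := by
  have hzq : Qser = 1 + (Qser * gf SA * MvPowerSeries.X 0
      + Qser * gf SC * MvPowerSeries.X 1) := by
    rw [Qser_eq]
    exact hz_eq
  have hQne : Qser ≠ 0 := by
    rw [Qser_eq]
    exact gfSZ_ne_zero
  exact cubic_of_system (MvPowerSeries.X 0) (MvPowerSeries.X 1) (gf SA) (gf SB) (gf SC) Qser
    hb_eq ha_eq hc_eq hzq hQne X1_ne_zero
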